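/- The set {⟨û₂, w(û₂)⟩ : w ∈ W(E₆)} equals {1, 1/4, −1/2}. (Equivalently: the possible distances between two vertices of type 2 of the Coxeter complex of type E₆ are exactly 0, arccos(1/4) and 2π/3; in particular a vertex of type 2 is never antipodal to another vertex of type 2.) -/

import Mathlib

noncomputable section

open scoped RealInnerProductSpace

/-- Euclidean space `ℝ⁸`. -/
abbrev E8Space := EuclideanSpace ℝ (Fin 8)

/-- The fundamental root vectors of the root system of type `E₆` inside `ℝ⁸`:
`r₁ = ½(1,1,1,−1,−1,−1,−1,−1)`, `rᵢ = eᵢ − eᵢ₋₁` for `2 ≤ i ≤ 5`, and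
`r₆ = ½(1,1,1,1,−1,1,1,1)` (here indexed by `Fin 6`, with `j = 0` corresponding
to `r₁` and `j = 5` to `r₆`). -/
def E6root : Fin 6 → E8Space := fun j =>
  if j = 0 then WithLp.toLp 2 (fun i => if (i : ℕ) < 3 then (1 : ℝ) / 2 else -(1 / 2))
  else if j = 5 then WithLp.toLp 2 (fun i => if (i : ℕ) = 4 then -(1 : ℝ) / 2 else 1 / 2)
  else WithLp.toLp 2 (fun i => if (i : ℕ) = (j : ℕ) then (1 : ℝ)
        else if (i : ℕ) + 1 = (j : ℕ) then -1 else 0)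

/-- The Weyl group `W(E₆)`: the subgroup of linear isometries of `ℝ⁸` generated by the
reflections `s_r(x) = x − 2(⟨x,r⟩/⟨r,r⟩)r` in the fundamental root vectors of type `E₆`.
These generators preserve the subspace `V = {x : x₆ = x₇ = x₈}` realizing the Coxeter
complex of type `E₆`. -/
def WeylE6 : Subgroup (E8Space ≃ₗᵢ[ℝ] E8Space) :=
  Subgroup.closure
    { f | ∃ j : Fin 6, ∀ x : E8Space,
        f x = x - ((2 * ⟪x, E6root j⟫ / ⟪E6root j, E6root j⟫) • E6root j) }

/-- `û₂ = (−3,3,3,3,3,−1,−1,−1)/(4√3)`, a unit vector representing a vertex of type 2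
of the Coxeter complex of type `E₆`. -/
def u2hatE6 : E8Space := WithLp.toLp 2 (fun i =>
  (if (i : ℕ) = 0 then -3 else if (i : ℕ) < 5 then 3 else -1) / (4 * Real.sqrt 3))

/-- `û₆ = (3,3,3,3,3,1,1,1)/(4√3)`, a unit vector representing a vertex of type 6
of the Coxeter complex of type `E₆`. -/
def u6hatE6 : E8Space := WithLp.toLp 2 (fun i =>
  (if (i : ℕ) < 5 then 3 else 1) / (4 * Real.sqrt 3))

/-! ### Integral model: all vectors are doubled so that everything is an integer vector. -/

/-- Half of an integer vector, as an element of `ℝ⁸`. -/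
def toH (v : Fin 8 → ℤ) : E8Space := WithLp.toLp 2 (fun i => (v i : ℝ) / 2)

def dotZ (v u : Fin 8 → ℤ) : ℤ :=
  v 0 * u 0 + v 1 * u 1 + v 2 * u 2 + v 3 * u 3 + v 4 * u 4 + v 5 * u 5 + v 6 * u 6 + v 7 * u 7

/-- Doubled roots (integer vectors). -/
def zroot : Fin 6 → Fin 8 → ℤ := fun j =>
  if j = 0 then (fun i => if (i : ℕ) < 3 then (1 : ℤ) else -1)
  else if j = 5 then (fun i => if (i : ℕ) = 4 then (-1 : ℤ) else 1)
  else (fun i => if (i : ℕ) = (j : ℕ) then (2 : ℤ)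
        else if (i : ℕ) + 1 = (j : ℕ) then -2 else 0)

/-- Reflection in the doubled-integer model. -/
def reflZ (r v : Fin 8 → ℤ) : Fin 8 → ℤ := fun i => v i - dotZ v r / 4 * r i

def w0Z : Fin 8 → ℤ := fun i => if (i : ℕ) = 0 then -6 else if (i : ℕ) < 5 then 6 else -2

/-- The doubled orbit of `û₂` (27 vectors). -/
def orbitS : List (Fin 8 → ℤ) :=
  [![-6,6,6,6,6,-2,-2,-2],
  ![6,-6,6,6,6,-2,-2,-2],
  ![6,6,-6,6,6,-2,-2,-2],
  ![6,6,6,-6,6,-2,-2,-2],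
  ![0,0,0,0,12,4,4,4],
  ![6,6,6,6,-6,-2,-2,-2],
  ![0,0,0,12,0,4,4,4],
  ![0,0,0,0,0,-8,-8,-8],
  ![0,0,12,0,0,4,4,4],
  ![-6,-6,-6,6,6,-2,-2,-2],
  ![0,12,0,0,0,4,4,4],
  ![-6,-6,6,-6,6,-2,-2,-2],
  ![12,0,0,0,0,4,4,4],
  ![-6,6,-6,-6,6,-2,-2,-2],
  ![-6,-6,6,6,-6,-2,-2,-2],
  ![6,-6,-6,-6,6,-2,-2,-2],
  ![-6,6,-6,6,-6,-2,-2,-2],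
  ![6,-6,-6,6,-6,-2,-2,-2],
  ![-6,6,6,-6,-6,-2,-2,-2],
  ![6,-6,6,-6,-6,-2,-2,-2],
  ![-12,0,0,0,0,4,4,4],
  ![0,-12,0,0,0,4,4,4],
  ![6,6,-6,-6,-6,-2,-2,-2],
  ![0,0,-12,0,0,4,4,4],
  ![0,0,0,-12,0,4,4,4],
  ![0,0,0,0,-12,4,4,4],
  ![-6,-6,-6,-6,-6,-2,-2,-2]]

lemma E6root_eq (j : Fin 6) : E6root j = toH (zroot j) := by
  ext i
  fin_cases j <;> fin_cases i <;>
    simp (config := { decide := true }) [E6root, zroot, toH] <;> norm_num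

lemma inner_toH (v u : Fin 8 → ℤ) : ⟪toH v, toH u⟫ = ((dotZ v u : ℤ) : ℝ) / 4 := by
  simp only [toH, PiLp.toLp_apply, PiLp.inner_apply, RCLike.inner_apply, conj_trivial, Fin.sum_univ_eight, dotZ]
  push_cast
  ring

lemma root_self (j : Fin 6) : ⟪E6root j, E6root j⟫ = 2 := by
  rw [E6root_eq, inner_toH]
  have : dotZ (zroot j) (zroot j) = 8 := by fin_cases j <;> decide
  rw [this]
  norm_num

lemma toH_inj : Function.Injective toH := by
  intro a b h
  funext i
  have h2 := congrArg (fun x : E8Space => x i) h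
  simp only [toH, PiLp.toLp_apply] at h2
  have : (a i : ℝ) = b i := by linarith
  exact_mod_cast this

lemma refl_apply {f : E8Space ≃ₗᵢ[ℝ] E8Space} {j : Fin 6}
    (h : ∀ x : E8Space, f x = x - ((2 * ⟪x, E6root j⟫ / ⟪E6root j, E6root j⟫) • E6root j))
    (v : Fin 8 → ℤ) (h4 : (4 : ℤ) ∣ dotZ v (zroot j)) :
    f (toH v) = toH (reflZ (zroot j) v) := by
  obtain ⟨k, hk⟩ := h4
  have hq : dotZ v (zroot j) / 4 = k := by omega
  rw [h, root_self, E6root_eq, inner_toH]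
  ext i
  simp only [PiLp.sub_apply, PiLp.smul_apply, smul_eq_mul, toH, PiLp.toLp_apply, reflZ, hq]
  rw [hk]
  push_cast
  ring

lemma orbit_invariant :
    ∀ j : Fin 6, ∀ v ∈ orbitS,
      (4 : ℤ) ∣ dotZ v (zroot j) ∧ reflZ (zroot j) v ∈ orbitS := by
  decide

lemma dot_values :
    ∀ v ∈ orbitS, dotZ w0Z v = 192 ∨ dotZ w0Z v = 48 ∨ dotZ w0Z v = -96 := by
  decide

lemma w0_mem : w0Z ∈ orbitS := by decide

lemma weyl_maps_orbit :
    ∀ w ∈ WeylE6, ∀ v ∈ orbitS, ∃ u ∈ orbitS, w (toH v) = toH u := by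
  intro w hw
  induction hw using Subgroup.closure_induction with
  | mem f hf =>
    obtain ⟨j, h⟩ := hf
    intro v hv
    obtain ⟨h4, hmem⟩ := orbit_invariant j v hv
    exact ⟨reflZ (zroot j) v, hmem, refl_apply h v h4⟩
  | one =>
    intro v hv
    exact ⟨v, hv, by simp⟩
  | mul a b ha hb pa pb =>
    intro v hv
    obtain ⟨u, hu, hbu⟩ := pb v hv
    obtain ⟨u', hu', hau⟩ := pa u hu
    refine ⟨u', hu', ?_⟩
    rw [LinearIsometryEquiv.coe_mul, Function.comp_apply, hbu, hau]
  | inv a ha pa =>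
    intro v hv
    classical
    set S : Finset (Fin 8 → ℤ) := orbitS.toFinset with hSdef
    have key : ∀ x ∈ S, ∃ u ∈ S, a (toH x) = toH u := by
      intro x hx
      obtain ⟨u, hu, h'⟩ := pa x (List.mem_toFinset.mp hx)
      exact ⟨u, List.mem_toFinset.mpr hu, h'⟩
    have surj := Finset.surj_on_of_inj_on_of_card_le
      (s := S) (t := S)
      (fun x hx => Classical.choose (key x hx))
      (fun x hx => (Classical.choose_spec (key x hx)).1)
      (fun x y hx hy heq => by
        have h1 := (Classical.choose_spec (key x hx)).2
        have h2 := (Classical.choose_spec (key y hy)).2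
        apply toH_inj
        apply a.injective
        rw [h1, h2, heq])
      le_rfl
    obtain ⟨x, hx, hxe⟩ := surj v (List.mem_toFinset.mpr hv)
    refine ⟨x, List.mem_toFinset.mp hx, ?_⟩
    have h1 : a (toH x) = toH v := by
      rw [(Classical.choose_spec (key x hx)).2, ← hxe]
    rw [← h1]
    simp

lemma u2_eq : u2hatE6 = (4 * Real.sqrt 3)⁻¹ • toH w0Z := by
  ext i
  fin_cases i <;>
    simp (config := { decide := true }) [u2hatE6, toH, w0Z, PiLp.smul_apply, smul_eq_mul] <;>
    ring

lemma inner_u2 (w : E8Space ≃ₗᵢ[ℝ] E8Space) (u : Fin 8 → ℤ) (h : w (toH w0Z) = toH u) :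
    ⟪u2hatE6, w u2hatE6⟫ = (dotZ w0Z u : ℝ) / 192 := by
  have hsq : Real.sqrt 3 * Real.sqrt 3 = 3 := Real.mul_self_sqrt (by norm_num)
  have hne : (4 * Real.sqrt 3) ≠ 0 := by positivity
  have h48 : (4 * Real.sqrt 3) * (4 * Real.sqrt 3) = 48 := by nlinarith [hsq]
  have hinv : (4 * Real.sqrt 3)⁻¹ * (4 * Real.sqrt 3)⁻¹ = 1 / 48 := by
    rw [← mul_inv, h48]; norm_num
  rw [u2_eq, w.map_smul, real_inner_smul_left, real_inner_smul_right, h, inner_toH,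
    ← mul_assoc, hinv]
  ring

/-! ### Explicit generators -/

def sgen (j : Fin 6) : E8Space ≃ₗᵢ[ℝ] E8Space :=
  (ℝ ∙ E6root j)ᗮ.reflection

lemma sgen_spec (j : Fin 6) :
    ∀ x : E8Space, sgen j x = x - ((2 * ⟪x, E6root j⟫ / ⟪E6root j, E6root j⟫) • E6root j) := by
  intro x
  have hn : (‖E6root j‖ : ℝ) ^ 2 = 2 := by
    rw [← real_inner_self_eq_norm_sq]; exact root_self j
  rw [sgen, Submodule.reflection_orthogonal_apply, Submodule.reflection_apply,
    Submodule.starProjection_singleton,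
    hn, root_self, real_inner_comm]
  module

lemma sgen_mem (j : Fin 6) : sgen j ∈ WeylE6 :=
  Subgroup.subset_closure ⟨j, sgen_spec j⟩

lemma sgen_apply (j : Fin 6) {v : Fin 8 → ℤ} (hv : v ∈ orbitS) :
    sgen j (toH v) = toH (reflZ (zroot j) v) ∧ reflZ (zroot j) v ∈ orbitS := by
  obtain ⟨h4, hm⟩ := orbit_invariant j v hv
  exact ⟨refl_apply (sgen_spec j) v h4, hm⟩

theorem inner_u2hatE6_orbit_eq :
    {t : ℝ | ∃ w ∈ WeylE6, ⟪u2hatE6, w u2hatE6⟫ = t} = {1, 1/4, -1/2} := by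
  ext t
  simp only [Set.mem_setOf_eq, Set.mem_insert_iff, Set.mem_singleton_iff]
  constructor
  · rintro ⟨w, hw, rfl⟩
    obtain ⟨u, hu, h⟩ := weyl_maps_orbit w hw w0Z w0_mem
    rw [inner_u2 w u h]
    rcases dot_values u hu with h' | h' | h' <;> rw [h'] <;> norm_num
  · intro ht
    rcases ht with rfl | rfl | rfl
    · refine ⟨1, one_mem _, ?_⟩
      have h : (1 : E8Space ≃ₗᵢ[ℝ] E8Space) (toH w0Z) = toH w0Z := by simp
      rw [inner_u2 1 w0Z h]
      norm_num [show dotZ w0Z w0Z = 192 from by decide]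
    · refine ⟨sgen 1, sgen_mem 1, ?_⟩
      obtain ⟨e1, m1⟩ := sgen_apply 1 w0_mem
      rw [inner_u2 _ _ e1]
      norm_num [show dotZ w0Z (reflZ (zroot 1) w0Z) = 48 from by decide]
    · obtain ⟨e1, m1⟩ := sgen_apply 1 w0_mem
      obtain ⟨e2, m2⟩ := sgen_apply 2 m1
      obtain ⟨e3, m3⟩ := sgen_apply 3 m2
      obtain ⟨e0, m0⟩ := sgen_apply 0 m3
      obtain ⟨e4, m4⟩ := sgen_apply 4 m0
      obtain ⟨e3', m3'⟩ := sgen_apply 3 m4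
      obtain ⟨e2', m2'⟩ := sgen_apply 2 m3'
      obtain ⟨e1', m1'⟩ := sgen_apply 1 m2'
      refine ⟨sgen 1 * sgen 2 * sgen 3 * sgen 4 * sgen 0 * sgen 3 * sgen 2 * sgen 1,
        mul_mem (mul_mem (mul_mem (mul_mem (mul_mem (mul_mem (mul_mem (sgen_mem 1)
          (sgen_mem 2)) (sgen_mem 3)) (sgen_mem 4)) (sgen_mem 0)) (sgen_mem 3))
          (sgen_mem 2)) (sgen_mem 1), ?_⟩
      have h : (sgen 1 * sgen 2 * sgen 3 * sgen 4 * sgen 0 * sgen 3 * sgen 2 * sgen 1)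
          (toH w0Z) = toH (reflZ (zroot 1) (reflZ (zroot 2) (reflZ (zroot 3) (reflZ (zroot 4)
            (reflZ (zroot 0) (reflZ (zroot 3) (reflZ (zroot 2) (reflZ (zroot 1) w0Z)))))))) := by
        simp only [LinearIsometryEquiv.coe_mul, Function.comp_apply]
        rw [e1, e2, e3, e0, e4, e3', e2', e1']
      rw [inner_u2 _ _ h]
      norm_num [show dotZ w0Z (reflZ (zroot 1) (reflZ (zroot 2) (reflZ (zroot 3) (reflZ (zroot 4)
        (reflZ (zroot 0) (reflZ (zroot 3) (reflZ (zroot 2) (reflZ (zroot 1) w0Z))))))))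
        = -96 from by decide]
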